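/- Let f ∈ C¹((0,∞)) ∩ C([0,∞)) be positive on (0,∞) with f nondecreasing on (0,∞), and suppose F(u) := ∫_u^∞ dτ/f(τ) is finite for all u > 0. If the limit q := lim_{ξ→∞} f'(ξ)F(ξ) exists, then q ≥ 1. -/
import Mathlib


open MeasureTheory Filter Set

/-- If f is C¹ on (0,∞), continuous on [0,∞), positive and nondecreasing
(f' ≥ 0) on (0,∞), with F(u) = ∫_u^∞ dτ/f(τ) finite for u > 0, and the limit
q = lim_{ξ→∞} f'(ξ)F(ξ) exists, then q ≥ 1. -/
theorem statement0 (f f' : ℝ → ℝ) (q : ℝ)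
    (hf_cont : ContinuousOn f (Set.Ici 0))
    (hf_diff : ∀ x > 0, HasDerivAt f (f' x) x)
    (hf'_cont : ContinuousOn f' (Set.Ioi 0))
    (hf_pos : ∀ x > 0, 0 < f x)
    (hf'_nonneg : ∀ x > 0, 0 ≤ f' x)
    (F : ℝ → ℝ) (hF : ∀ u, F u = ∫ τ in Set.Ioi u, 1 / f τ)
    (hF_fin : ∀ u > 0, IntegrableOn (fun τ => 1 / f τ) (Set.Ioi u))
    (hq : Tendsto (fun ξ => f' ξ * F ξ) atTop (nhds q)) :
    1 ≤ q := by
  by_contra hlt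
  push_neg at hlt
  -- continuity of 1/f on Ioi 0
  have hfc : ∀ x > 0, ContinuousAt f x := fun x hx => (hf_diff x hx).continuousAt
  have hinvc : ∀ x > 0, ContinuousAt (fun τ => 1 / f τ) x := fun x hx =>
    continuousAt_const.div (hfc x hx) (ne_of_gt (hf_pos x hx))
  -- F u = (∫ t in u..x, 1/f) + F x for 0 < u ≤ x
  have haux : ∀ u x : ℝ, 0 < u → u ≤ x → F u = (∫ t in u..x, 1 / f t) + F x := by
    intro u x hu hux
    rw [intervalIntegral.integral_of_le hux, hF u, hF x,
      ← Ioc_union_Ioi_eq_Ioi hux,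
      setIntegral_union (Ioc_disjoint_Ioi le_rfl) measurableSet_Ioi
        ((hF_fin u hu).mono_set Ioc_subset_Ioi_self)
        (hF_fin x (lt_of_lt_of_le hu hux))]
  have hFsub : ∀ u x : ℝ, 0 < u → 0 < x → F x = F u - ∫ t in u..x, 1 / f t := by
    intro u x hu hx
    rcases le_total u x with h | h
    · rw [haux u x hu h]; ring
    · rw [haux x u hx h, intervalIntegral.integral_symm]; ring
  -- derivative of F
  have hFderiv : ∀ u : ℝ, 0 < u → HasDerivAt F (-(1 / f u)) u := by
    intro u hu
    have hint : IntervalIntegrable (fun τ => 1 / f τ) volume u u := by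
      simp [IntervalIntegrable]
    have hmeas : StronglyMeasurableAtFilter (fun τ => 1 / f τ) (nhds u) := by
      refine ⟨Set.Ioi 0, isOpen_Ioi.mem_nhds hu, ?_⟩
      exact (ContinuousOn.aestronglyMeasurable
        (fun x hx => (hinvc x hx).continuousWithinAt) measurableSet_Ioi)
    have h1 : HasDerivAt (fun x => ∫ t in u..x, 1 / f t) (1 / f u) u :=
      intervalIntegral.integral_hasDerivAt_right hint hmeas (hinvc u hu)
    have h2 : HasDerivAt (fun x => F u - ∫ t in u..x, 1 / f t) (-(1 / f u)) u :=
      h1.const_sub (F u)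
    refine h2.congr_of_eventuallyEq ?_
    filter_upwards [isOpen_Ioi.mem_nhds hu] with x hx
    exact hFsub u x hu hx
  -- F is positive on Ioi 0
  have hFpos : ∀ u : ℝ, 0 < u → 0 < F u := by
    intro u hu
    have hae : 0 ≤ᶠ[ae (volume.restrict (Ioi u))] fun τ => 1 / f τ := by
      filter_upwards [ae_restrict_mem measurableSet_Ioi] with x hx
      have := hf_pos x (lt_trans hu hx)
      positivity
    rw [hF u, setIntegral_pos_iff_support_of_nonneg_ae hae (hF_fin u hu)]
    have hsub : Ioi u ⊆ Function.support (fun τ => 1 / f τ) ∩ Ioi u := by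
      intro x hx
      refine ⟨?_, hx⟩
      have := hf_pos x (lt_trans hu hx)
      simp only [Function.mem_support]
      positivity
    refine lt_of_lt_of_le ?_ (measure_mono hsub)
    simp [Real.volume_Ioi]
  -- derivative of G = f * F
  have hG : ∀ x : ℝ, 0 < x → HasDerivAt (fun y => f y * F y) (f' x * F x - 1) x := by
    intro x hx
    have h := (hf_diff x hx).mul (hFderiv x hx)
    have : f' x * F x + f x * -(1 / f x) = f' x * F x - 1 := by
      rw [mul_neg, mul_one_div, div_self (ne_of_gt (hf_pos x hx))]
      ring
    rwa [this] at h
  -- choose the constant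
  set c : ℝ := (1 - q) / 2 with hc
  have hcpos : 0 < c := by simp [hc]; linarith
  -- eventually f' ξ * F ξ ≤ (1+q)/2
  have hev : ∀ᶠ ξ in atTop, f' ξ * F ξ ≤ (1 + q) / 2 :=
    hq.eventually_le_const (by linarith)
  obtain ⟨M₀, hM₀⟩ := eventually_atTop.1 hev
  set M : ℝ := max M₀ 1 with hM
  have hMpos : (0 : ℝ) < M := lt_of_lt_of_le one_pos (le_max_right _ _)
  -- H = f * F + c * x is antitone on Ici M
  have hH : ∀ x : ℝ, 0 < x →
      HasDerivAt (fun y => f y * F y + c * y) (f' x * F x - 1 + c) x := by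
    intro x hx
    have h2 : HasDerivAt (fun y : ℝ => c * y) c x := by
      simpa using (hasDerivAt_id x).const_mul c
    exact (hG x hx).add h2
  have hanti : AntitoneOn (fun y => f y * F y + c * y) (Set.Ici M) := by
    refine antitoneOn_of_deriv_nonpos (convex_Ici M) ?_ ?_ ?_
    · intro x hx
      exact (hH x (lt_of_lt_of_le hMpos hx)).continuousAt.continuousWithinAt
    · intro x hx
      rw [interior_Ici] at hx
      exact ((hH x (lt_trans hMpos hx)).differentiableAt).differentiableWithinAt
    · intro x hx
      rw [interior_Ici] at hx
      have hx0 : 0 < x := lt_trans hMpos hx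
      rw [(hH x hx0).deriv]
      have hle : f' x * F x ≤ (1 + q) / 2 :=
        hM₀ x (le_of_lt (lt_of_le_of_lt (le_max_left _ _) hx))
      simp only [hc]
      linarith
  -- contradiction at a large point
  set x : ℝ := max M ((f M * F M + c * M) / c + 1) with hx
  have hxM : M ≤ x := le_max_left _ _
  have hkey : f x * F x + c * x ≤ f M * F M + c * M :=
    hanti (self_mem_Ici) hxM hxM
  have hcx : f M * F M + c * M < c * x := by
    have h1 : (f M * F M + c * M) / c + 1 ≤ x := le_max_right _ _
    have h2 : c * ((f M * F M + c * M) / c + 1) ≤ c * x :=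
      mul_le_mul_of_nonneg_left h1 (le_of_lt hcpos)
    rw [mul_add, mul_one, mul_div_cancel₀ _ (ne_of_gt hcpos)] at h2
    linarith
  have hxpos : 0 < x := lt_of_lt_of_le hMpos hxM
  have : 0 < f x * F x := mul_pos (hf_pos x hxpos) (hFpos x hxpos)
  linarith
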